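/- arXiv:2603.16564 — 4 statements merged into one kernel-verified Lean document; each statement's English description precedes it below -/
import Mathlib

section
/- For l = 1, …, m let A_l and B_l be Hermitian square complex matrices of the same size N×N satisfying A_l² = I, B_l² = I, and A_l B_l = −B_l A_l, let v_l be a unit vector with B_l v_l = v_l, and let θ_1, …, θ_m be real numbers. Define ψ := (exp(θ_1 • A_1B_1) v_1) ⊗ ⋯ ⊗ (exp(θ_m • A_mB_m) v_m), a vector in the m-fold Kronecker product space, and for a fixed k define M_k := I^{⊗(k−1)} ⊗ B_k ⊗ I^{⊗(m−k)}. Then ⟨ψ, M_k ψ⟩ = cos²θ_k − sin²θ_k, which lies in the interval [−1, 1]. -/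
open Matrix

/-- The Kronecker product `M 0 ⊗ M 1 ⊗ ⋯ ⊗ M (m-1)` of `m` matrices of size `N × N`,
realized as a matrix on the space indexed by `Fin m → Fin N`. -/
def tensorMat (m N : ℕ) (M : Fin m → Matrix (Fin N) (Fin N) ℂ) :
    Matrix (Fin m → Fin N) (Fin m → Fin N) ℂ :=
  Matrix.of fun x y => ∏ l, M l (x l) (y l)

/-- The Kronecker product `w 0 ⊗ w 1 ⊗ ⋯ ⊗ w (m-1)` of `m` vectors of length `N`,
realized as a vector indexed by `Fin m → Fin N`. -/
def tensorVecN (m N : ℕ) (w : Fin m → (Fin N → ℂ)) : (Fin m → Fin N) → ℂ :=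
  fun x => ∏ l, w l (x l)

lemma swap_sum_prod {m N : ℕ} (f : Fin m → Fin N → ℂ) :
    (∑ x : Fin m → Fin N, ∏ l, f l (x l)) = ∏ l, ∑ j, f l j := by
  classical
  rw [Finset.prod_univ_sum (fun _ => (Finset.univ : Finset (Fin N))) f,
    Fintype.piFinset_univ]

/-- factorization of the quadratic form over tensor factors -/
lemma tensor_dot' (m N : ℕ) (M : Fin m → Matrix (Fin N) (Fin N) ℂ)
    (w : Fin m → (Fin N → ℂ)) :
    star (tensorVecN m N w) ⬝ᵥ (tensorMat m N M).mulVec (tensorVecN m N w)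
      = ∏ l, star (w l) ⬝ᵥ (M l).mulVec (w l) := by
  classical
  simp only [dotProduct, mulVec, tensorVecN, tensorMat, of_apply, Pi.star_apply]
  have h1 : ∀ x : Fin m → Fin N,
      (∑ y : Fin m → Fin N, (∏ l, M l (x l) (y l)) * ∏ l, w l (y l))
        = ∏ l, ∑ j, M l (x l) j * w l j := by
    intro x
    rw [← swap_sum_prod (fun l j => M l (x l) j * w l j)]
    exact Finset.sum_congr rfl fun y _ => (Finset.prod_mul_distrib).symm
  calc (∑ x : Fin m → Fin N, star (∏ l, w l (x l)) *
          ∑ y : Fin m → Fin N, (∏ l, M l (x l) (y l)) * ∏ l, w l (y l))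
      = ∑ x : Fin m → Fin N, ∏ l, (star (w l (x l)) * ∑ j, M l (x l) j * w l j) := by
        refine Finset.sum_congr rfl fun x _ => ?_
        rw [h1 x, star_prod, ← Finset.prod_mul_distrib]
    _ = ∏ l, ∑ i, star (w l i) * ∑ j, M l i j * w l j :=
        swap_sum_prod (fun l i => star (w l i) * ∑ j, M l i j * w l j)

/-- exponential of a matrix squaring to `-1` -/
lemma exp_square_neg_one {n : Type*} [Fintype n] [DecidableEq n]
    (C : Matrix n n ℂ) (hC : C * C = -1) (θ : ℝ) :
    NormedSpace.exp ((θ : ℂ) • C)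
      = (Real.cos θ : ℂ) • (1 : Matrix n n ℂ) + (Real.sin θ : ℂ) • C := by
  letI : SeminormedRing (Matrix n n ℂ) := Matrix.linftyOpSemiNormedRing
  letI : NormedRing (Matrix n n ℂ) := Matrix.linftyOpNormedRing
  letI : NormedAlgebra ℝ (Matrix n n ℂ) := Matrix.linftyOpNormedAlgebra
  letI : NormedAlgebra ℂ (Matrix n n ℂ) := Matrix.linftyOpNormedAlgebra
  let φ : ℂ →ₐ[ℝ] Matrix n n ℂ := Complex.liftAux C hC
  have hcont : Continuous φ := φ.toLinearMap.continuous_of_finiteDimensional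
  have hsmul : ∀ (t : ℝ) (D : Matrix n n ℂ), (t : ℂ) • D = t • D :=
    fun t D => Complex.coe_smul t D
  have hφ : φ ((θ : ℂ) * Complex.I) = (θ : ℂ) • C := by
    simp [φ, Complex.liftAux_apply, hsmul]
  have key : NormedSpace.exp (φ ((θ : ℂ) * Complex.I))
      = φ (NormedSpace.exp ((θ : ℂ) * Complex.I)) :=
    (NormedSpace.map_exp (φ : ℂ →+* Matrix n n ℂ) hcont _).symm
  have hexp : NormedSpace.exp ((θ : ℂ) * Complex.I)
      = Complex.exp ((θ : ℂ) * Complex.I) := by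
    rw [← Complex.exp_eq_exp_ℂ]
  have hRC : NormedSpace.exp ((θ : ℂ) • C) = NormedSpace.exp ((θ : ℂ) • C) := by
    rfl
  rw [hRC, ← hφ, key, hexp, Complex.exp_mul_I, ← Complex.ofReal_cos, ← Complex.ofReal_sin]
  simp only [φ, Complex.liftAux_apply, Algebra.algebraMap_eq_smul_one, Complex.add_re,
    Complex.ofReal_re, Complex.mul_re, Complex.ofReal_im, Complex.I_re, Complex.I_im,
    Complex.add_im, Complex.mul_im,
    mul_zero, mul_one, zero_mul, sub_zero, add_zero, zero_add, zero_sub]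
  rw [hsmul, hsmul]

section single

variable {n : Type*} [Fintype n] [DecidableEq n]
variable (A B : Matrix n n ℂ) (v : n → ℂ)

lemma single_facts (hA : A.IsHermitian) (hB : B.IsHermitian)
    (hA2 : A * A = 1) (hAB : A * B = -(B * A))
    (hv : star v ⬝ᵥ v = 1) (hBv : B.mulVec v = v) :
    star v ⬝ᵥ A.mulVec v = 0 ∧ star (A.mulVec v) ⬝ᵥ v = 0 ∧
    star (A.mulVec v) ⬝ᵥ A.mulVec v = 1 ∧ B.mulVec (A.mulVec v) = -(A.mulVec v) := by
  set u := A.mulVec v with hu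
  have hstarv : star v ᵥ* B = star v := by
    have := Matrix.star_mulVec B v
    rw [hBv, hB.eq] at this
    exact this.symm
  have hstaru : star u = star v ᵥ* A := by
    rw [hu, Matrix.star_mulVec, hA.eq]
  have hBu : B.mulVec u = -u := by
    rw [hu, Matrix.mulVec_mulVec, ← neg_neg (B * A), ← hAB]
    conv_rhs => rw [← hBv]
    rw [Matrix.mulVec_mulVec, Matrix.neg_mulVec]
  have hvu : star v ⬝ᵥ u = 0 := by
    have h : star v ⬝ᵥ u = -(star v ⬝ᵥ u) := by
      conv_lhs => rw [← hstarv, ← Matrix.dotProduct_mulVec, hBu, dotProduct_neg]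
    linear_combination h / 2
  have huv : star u ⬝ᵥ v = 0 := by
    rw [hstaru, ← Matrix.dotProduct_mulVec, ← hu, hvu]
  have huu : star u ⬝ᵥ u = 1 := by
    rw [hstaru, ← Matrix.dotProduct_mulVec, hu, Matrix.mulVec_mulVec, hA2,
      Matrix.one_mulVec, hv]
  exact ⟨hvu, huv, huu, hBu⟩

lemma single_exp_vec (hA2 : A * A = 1) (hB2 : B * B = 1) (hAB : A * B = -(B * A))
    (hBv : B.mulVec v = v) (θ : ℝ) :
    (NormedSpace.exp ((θ : ℂ) • (A * B))).mulVec v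
      = (Real.cos θ : ℂ) • v + (Real.sin θ : ℂ) • A.mulVec v := by
  have hBA : B * A = -(A * B) := by rw [hAB, neg_neg]
  have hC : (A * B) * (A * B) = -1 := by
    calc (A * B) * (A * B) = A * ((B * A) * B) := by noncomm_ring
      _ = A * ((-(A * B)) * B) := by rw [hBA]
      _ = -((A * A) * (B * B)) := by noncomm_ring
      _ = -1 := by rw [hA2, hB2, one_mul]
  rw [exp_square_neg_one (A * B) hC θ, Matrix.add_mulVec, Matrix.smul_mulVec,
    Matrix.smul_mulVec, Matrix.one_mulVec, ← Matrix.mulVec_mulVec, hBv]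

lemma single_value (hA : A.IsHermitian) (hB : B.IsHermitian)
    (hA2 : A * A = 1) (hB2 : B * B = 1) (hAB : A * B = -(B * A))
    (hv : star v ⬝ᵥ v = 1) (hBv : B.mulVec v = v) (θ : ℝ) :
    star ((NormedSpace.exp ((θ : ℂ) • (A * B))).mulVec v) ⬝ᵥ
      B.mulVec ((NormedSpace.exp ((θ : ℂ) • (A * B))).mulVec v)
        = ((Real.cos θ ^ 2 - Real.sin θ ^ 2 : ℝ) : ℂ) ∧
    star ((NormedSpace.exp ((θ : ℂ) • (A * B))).mulVec v) ⬝ᵥ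
      ((NormedSpace.exp ((θ : ℂ) • (A * B))).mulVec v) = 1 := by
  obtain ⟨hvu, huv, huu, hBu⟩ := single_facts A B v hA hB hA2 hAB hv hBv
  set u := A.mulVec v with hu
  set c := (Real.cos θ : ℂ) with hc
  set s := (Real.sin θ : ℂ) with hs
  have hw : (NormedSpace.exp ((θ : ℂ) • (A * B))).mulVec v = c • v + s • u :=
    single_exp_vec A B v hA2 hB2 hAB hBv θ
  have hstar : star (c • v + s • u) = c • star v + s • star u := by
    simp only [star_add, star_smul, hc, hs, Complex.star_def, Complex.conj_ofReal]
  have hBw : B.mulVec (c • v + s • u) = c • v + (-s) • u := by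
    rw [Matrix.mulVec_add, Matrix.mulVec_smul, Matrix.mulVec_smul, hBv, hBu]
    module
  constructor
  · rw [hw, hstar, hBw]
    simp only [add_dotProduct, dotProduct_add, smul_dotProduct, dotProduct_smul,
      hv, hvu, huv, huu, smul_eq_mul]
    rw [Complex.ofReal_sub, Complex.ofReal_pow, Complex.ofReal_pow, ← hc, ← hs]
    ring
  · rw [hw, hstar]
    simp only [add_dotProduct, dotProduct_add, smul_dotProduct, dotProduct_smul,
      hv, hvu, huv, huu, smul_eq_mul]
    have h1 : c ^ 2 + s ^ 2 = 1 := by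
      rw [hc, hs, ← Complex.ofReal_pow, ← Complex.ofReal_pow, ← Complex.ofReal_add,
        Real.cos_sq_add_sin_sq, Complex.ofReal_one]
    linear_combination h1

end single

theorem tensor_expectation_value (m N : ℕ)
    (A B : Fin m → Matrix (Fin N) (Fin N) ℂ)
    (hA : ∀ l, (A l).IsHermitian) (hB : ∀ l, (B l).IsHermitian)
    (hA2 : ∀ l, A l * A l = 1) (hB2 : ∀ l, B l * B l = 1)
    (hAB : ∀ l, A l * B l = -(B l * A l))
    (v : Fin m → (Fin N → ℂ))
    (hv : ∀ l, star (v l) ⬝ᵥ v l = 1) (hBv : ∀ l, (B l).mulVec (v l) = v l)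
    (θ : Fin m → ℝ) (k : Fin m)
    (ψ : (Fin m → Fin N) → ℂ)
    (hψ : ψ = tensorVecN m N (fun l =>
      (NormedSpace.exp ((θ l : ℂ) • (A l * B l))).mulVec (v l)))
    (Mk : Matrix (Fin m → Fin N) (Fin m → Fin N) ℂ)
    (hMk : Mk = tensorMat m N (fun l => if l = k then B k else 1)) :
    star ψ ⬝ᵥ Mk.mulVec ψ = ((Real.cos (θ k) ^ 2 - Real.sin (θ k) ^ 2 : ℝ) : ℂ) ∧
    (Real.cos (θ k) ^ 2 - Real.sin (θ k) ^ 2) ∈ Set.Icc (-1 : ℝ) 1 := by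
  constructor
  · rw [hψ, hMk, tensor_dot']
    rw [Finset.prod_eq_single k]
    · simp only [if_pos rfl]
      exact (single_value (A k) (B k) (v k) (hA k) (hB k) (hA2 k) (hB2 k) (hAB k)
        (hv k) (hBv k) (θ k)).1
    · intro l _ hl
      rw [if_neg hl, Matrix.one_mulVec]
      exact (single_value (A l) (B l) (v l) (hA l) (hB l) (hA2 l) (hB2 l) (hAB l)
        (hv l) (hBv l) (θ l)).2
    · intro h
      exact absurd (Finset.mem_univ k) h
  · have h1 := Real.sin_sq_add_cos_sq (θ k)
    rw [Set.mem_Icc]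
    constructor <;> nlinarith [sq_nonneg (Real.sin (θ k)), sq_nonneg (Real.cos (θ k))]
end

section
/- Let α and β be orthonormal vectors in a complex inner product space, let θ be real, and set ψ := cos θ • α + sin θ • β. Let O be a linear endomorphism satisfying O α = α and O β = −β, and define the Grover operator G := (2 P_ψ − I) ∘ O, where P_ψ is the orthogonal projection x ↦ ⟨ψ, x⟩ • ψ. Then for every natural number k, the k-fold iterate satisfies G^k ψ = cos((2k+1)θ) • α + sin((2k+1)θ) • β. -/
open InnerProductSpace

local notation "⟪" x ", " y "⟫" => @inner ℂ _ _ x y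

theorem grover_iterate_state (V : Type*) [NormedAddCommGroup V] [InnerProductSpace ℂ V]
    (α β : V) (hαα : ⟪α, α⟫ = 1) (hββ : ⟪β, β⟫ = 1) (hαβ : ⟪α, β⟫ = 0)
    (θ : ℝ) (ψ : V) (hψ : ψ = (Real.cos θ : ℂ) • α + (Real.sin θ : ℂ) • β)
    (O : V →ₗ[ℂ] V) (hOα : O α = α) (hOβ : O β = -β)
    (G : V →ₗ[ℂ] V)
    (hG : G = ((2 : ℂ) • ((LinearMap.toSpanSingleton ℂ V ψ).comp (innerₛₗ ℂ ψ))
      - LinearMap.id) ∘ₗ O) :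
    ∀ k : ℕ, (G ^ k) ψ
      = (Real.cos ((2 * k + 1) * θ) : ℂ) • α + (Real.sin ((2 * k + 1) * θ) : ℂ) • β := by
  have hβα : ⟪β, α⟫ = 0 := by
    rw [← inner_conj_symm, hαβ, map_zero]
  have key : ∀ c : ℝ, G ((Real.cos c : ℂ) • α + (Real.sin c : ℂ) • β)
      = (Real.cos (c + 2*θ) : ℂ) • α + (Real.sin (c + 2*θ) : ℂ) • β := by
    intro c
    rw [hG]
    simp only [LinearMap.comp_apply, map_add, map_smul, hOα, hOβ,
      LinearMap.sub_apply, LinearMap.smul_apply, LinearMap.id_apply,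
      LinearMap.toSpanSingleton_apply, innerₛₗ_apply_apply]
    rw [hψ]
    simp only [inner_add_left, inner_add_right, inner_smul_left, inner_smul_right,
      inner_neg_right, smul_neg, hαα, hββ, hαβ, hβα, Complex.conj_ofReal,
      mul_zero, mul_one, zero_add, add_zero, mul_neg]
    match_scalars <;>
    · simp only [Complex.cos_add, Complex.sin_add, Complex.cos_two_mul, Complex.sin_two_mul]
      first
      | ring1
      | linear_combination (-2 * Complex.sin (c:ℂ)) * (Complex.sin_sq_add_cos_sq (θ:ℂ))
  intro k
  induction k with
  | zero => simp [hψ]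
  | succ k ih =>
    rw [pow_succ', Module.End.mul_apply, ih, key]
    push_cast
    ring_nf
end

section
/- Let α and β be orthonormal vectors in a complex inner product space, let θ be real, and set ψ := cos θ • α + sin θ • β. Let O be a linear endomorphism satisfying O α = α and O β = −β, and define the Grover operator G := (2 P_ψ − I) ∘ O, where P_ψ is the orthogonal projection x ↦ ⟨ψ, x⟩ • ψ. Then for every natural number k, the probability of obtaining the solution after k iterations satisfies |⟨β, G^k ψ⟩|² = sin²((2k+1)θ). -/
open InnerProductSpace

local notation "⟪" x ", " y "⟫" => @inner ℂ _ _ x y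

theorem grover_success_probability (V : Type*) [NormedAddCommGroup V] [InnerProductSpace ℂ V]
    (α β : V) (hαα : ⟪α, α⟫ = 1) (hββ : ⟪β, β⟫ = 1) (hαβ : ⟪α, β⟫ = 0)
    (θ : ℝ) (ψ : V) (hψ : ψ = (Real.cos θ : ℂ) • α + (Real.sin θ : ℂ) • β)
    (O : V →ₗ[ℂ] V) (hOα : O α = α) (hOβ : O β = -β)
    (G : V →ₗ[ℂ] V)
    (hG : G = ((2 : ℂ) • ((LinearMap.toSpanSingleton ℂ V ψ).comp (innerₛₗ ℂ ψ))
      - LinearMap.id) ∘ₗ O) :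
    ∀ k : ℕ, ‖⟪β, (G ^ k) ψ⟫‖ ^ 2 = Real.sin ((2 * k + 1) * θ) ^ 2 := by
  have hβα : ⟪β, α⟫ = 0 := by
    rw [← inner_conj_symm, hαβ, map_zero]
  have key : ∀ φ : ℝ, G ((Real.cos φ : ℂ) • α + (Real.sin φ : ℂ) • β)
      = (Real.cos (φ + 2*θ) : ℂ) • α + (Real.sin (φ + 2*θ) : ℂ) • β := by
    intro φ
    have hO : O ((Real.cos φ : ℂ) • α + (Real.sin φ : ℂ) • β)
        = (Real.cos φ : ℂ) • α - (Real.sin φ : ℂ) • β := by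
      simp [map_add, map_smul, hOα, hOβ, sub_eq_add_neg, smul_neg]
    have hip : ⟪ψ, (Real.cos φ : ℂ) • α - (Real.sin φ : ℂ) • β⟫
        = (Real.cos (φ + θ) : ℂ) := by
      simp only [hψ, inner_add_left, inner_sub_right, inner_smul_left, inner_smul_right,
        hαα, hββ, hαβ, hβα, Complex.conj_ofReal]
      rw [Real.cos_add]
      push_cast
      ring
    rw [hG]
    simp only [LinearMap.comp_apply, hO, LinearMap.sub_apply, LinearMap.smul_apply,
      LinearMap.toSpanSingleton_apply, innerₛₗ_apply_apply, LinearMap.id_apply]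
    rw [hip, hψ]
    have c1 : Real.cos (φ+2*θ) = 2 * Real.cos (φ+θ) * Real.cos θ - Real.cos φ := by
      rw [show φ + 2*θ = (φ+θ)+θ by ring, Real.cos_add (φ+θ) θ, Real.cos_add φ θ,
        Real.sin_add φ θ]
      linear_combination (- Real.cos φ) * Real.sin_sq_add_cos_sq θ
    have c2 : Real.sin (φ+2*θ) = 2 * Real.cos (φ+θ) * Real.sin θ + Real.sin φ := by
      rw [show φ + 2*θ = (φ+θ)+θ by ring, Real.sin_add (φ+θ) θ, Real.cos_add φ θ,
        Real.sin_add φ θ]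
      linear_combination (Real.sin φ) * Real.sin_sq_add_cos_sq θ
    rw [c1, c2]
    push_cast
    module
  have main : ∀ k : ℕ, (G ^ k) ψ
      = (Real.cos ((2*k+1)*θ) : ℂ) • α + (Real.sin ((2*k+1)*θ) : ℂ) • β := by
    intro k
    induction k with
    | zero => simpa using hψ
    | succ n ih =>
      rw [pow_succ', Module.End.mul_apply, ih, key]
      have h1 : (2*(n:ℝ)+1)*θ + 2*θ = (2*((n:ℕ)+1:ℕ)+1)*θ := by push_cast; ring
      rw [h1]
  intro k
  rw [main k]
  simp only [inner_add_right, inner_smul_right, hββ, hβα, mul_zero, mul_one, zero_add]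
  rw [Complex.norm_real, Real.norm_eq_abs, sq_abs]
end

section
/- Let A and B be square complex matrices of the same size satisfying A² = I, B² = I, and A B = −B A, and let v be a vector with B v = v. Then for all real numbers θ and t, the time-evolved state satisfies exp(tθ • (A B)) (cos θ • v + sin θ • (A v)) = cos((1+t)θ) • v + sin((1+t)θ) • (A v). In particular, choosing t so that (1+t)θ = π/2 drives the system from the state cos θ • v + sin θ • A v to the target state A v. -/
open Matrix

lemma exp_smul_sq_neg_one {N : ℕ} (J : Matrix (Fin N) (Fin N) ℂ)
    (hJ : J * J = -1) (c : ℝ) :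
    NormedSpace.exp ((c : ℂ) • J)
      = (Real.cos c : ℂ) • (1 : Matrix (Fin N) (Fin N) ℂ) + (Real.sin c : ℂ) • J := by
  letI : SeminormedRing (Matrix (Fin N) (Fin N) ℂ) := Matrix.linftyOpSemiNormedRing
  letI : NormedRing (Matrix (Fin N) (Fin N) ℂ) := Matrix.linftyOpNormedRing
  letI : NormedAlgebra ℝ (Matrix (Fin N) (Fin N) ℂ) := Matrix.linftyOpNormedAlgebra
  letI : NormedAlgebra ℂ (Matrix (Fin N) (Fin N) ℂ) := Matrix.linftyOpNormedAlgebra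
  set φ : ℂ →ₐ[ℝ] Matrix (Fin N) (Fin N) ℂ := Complex.liftAux J hJ with hφ
  have hφcont : Continuous φ := by
    have : ∀ z : ℂ, φ z = algebraMap ℝ _ z.re + z.im • J := fun z => rfl
    simp only [funext this]
    fun_prop
  have h1 : (c : ℂ) • J = φ ((c : ℂ) * Complex.I) := by
    simp [hφ, Complex.liftAux_apply, Algebra.algebraMap_eq_smul_one, ← Complex.coe_smul]
  rw [h1]
  erw [← NormedSpace.map_exp φ hφcont]
  rw [← Complex.exp_eq_exp_ℂ, Complex.exp_mul_I,
    ← Complex.ofReal_cos, ← Complex.ofReal_sin]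
  simp only [hφ, map_add, _root_.map_mul, Complex.liftAux_apply, Complex.ofReal_re, Complex.ofReal_im,
    Complex.I_re, Complex.I_im, Complex.mul_re, Complex.mul_im]
  rw [Algebra.algebraMap_eq_smul_one, Algebra.algebraMap_eq_smul_one]
  simp [← Complex.coe_smul]

theorem hamiltonian_evolution_rotation (N : ℕ)
    (A B : Matrix (Fin N) (Fin N) ℂ)
    (hA : A * A = 1) (hB : B * B = 1) (hAB : A * B = -(B * A))
    (v : Fin N → ℂ) (hv : B.mulVec v = v) :
    ∀ θ t : ℝ,
      (NormedSpace.exp (((t * θ : ℝ) : ℂ) • (A * B))).mulVec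
          ((Real.cos θ : ℂ) • v + (Real.sin θ : ℂ) • A.mulVec v)
        = (Real.cos ((1 + t) * θ) : ℂ) • v
          + (Real.sin ((1 + t) * θ) : ℂ) • A.mulVec v := by
  intro θ t
  have hBA : B * A = -(A * B) := by rw [hAB, neg_neg]
  have hJ : (A * B) * (A * B) = -1 := by
    calc (A * B) * (A * B) = A * (B * A * B) := by rw [mul_assoc, mul_assoc]
      _ = A * (-(A * B) * B) := by rw [hBA]
      _ = -(A * A * (B * B)) := by noncomm_ring
      _ = -1 := by rw [hA, hB, mul_one]
  rw [exp_smul_sq_neg_one (A * B) hJ (t * θ)]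
  have hJv : (A * B).mulVec v = A.mulVec v := by
    rw [← Matrix.mulVec_mulVec, hv]
  have hJAv : (A * B).mulVec (A.mulVec v) = -v := by
    have : A * B * A = -B := by
      calc A * B * A = -(B * A) * A := by rw [hAB]
        _ = -(B * (A * A)) := by noncomm_ring
        _ = -B := by rw [hA, mul_one]
    rw [Matrix.mulVec_mulVec, this, Matrix.neg_mulVec, hv]
  rw [Matrix.add_mulVec, Matrix.smul_mulVec, Matrix.smul_mulVec, Matrix.one_mulVec,
    Matrix.mulVec_add, Matrix.mulVec_smul, Matrix.mulVec_smul, hJv, hJAv]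
  have hc : (Real.cos ((1 + t) * θ) : ℂ)
      = (Real.cos θ : ℂ) * (Real.cos (t * θ) : ℂ) - (Real.sin θ : ℂ) * (Real.sin (t * θ) : ℂ) := by
    rw [show (1 + t) * θ = θ + t * θ by ring, Real.cos_add]; push_cast; ring
  have hs : (Real.sin ((1 + t) * θ) : ℂ)
      = (Real.sin θ : ℂ) * (Real.cos (t * θ) : ℂ) + (Real.cos θ : ℂ) * (Real.sin (t * θ) : ℂ) := by
    rw [show (1 + t) * θ = θ + t * θ by ring, Real.sin_add]; push_cast; ring
  rw [hc, hs]
  module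
end
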